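/- For every integer k ≥ 0, S_k = (Ī₂)_k + span_ℂ{ k×k minors of the generic matrix (x_{i,j}) }, where a k×k minor is the determinant of the submatrix of (x_{i,j}) with rows i_1 < ⋯ < i_k and columns j_1 < ⋯ < j_k (for k = 0 this span is ℂ·1, and for k > min(m,n) it is 0, so that (Ī₂)_k = S_k in that case). -/

import Mathlib

open MvPolynomial

/-- Index set for the generalized 2×2 permanents of a generic `m × n` matrix:
quadruples `((i,i'),(j,j'))` with `i ≤ i'` and `j ≤ j'`. -/
def PermIdx (m n : ℕ) : Type :=
  {w : (Fin m × Fin m) × (Fin n × Fin n) // w.1.1 ≤ w.1.2 ∧ w.2.1 ≤ w.2.2}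

/-- The generalized 2×2 permanent
`p_{(i,i'),(j,j')} = x_{i,j} x_{i',j'} + x_{i,j'} x_{i',j}`. -/
noncomputable def perm {m n : ℕ} (w : PermIdx m n) : MvPolynomial (Fin m × Fin n) ℂ :=
  X (w.1.1.1, w.1.2.1) * X (w.1.1.2, w.1.2.2) + X (w.1.1.1, w.1.2.2) * X (w.1.1.2, w.1.2.1)

/-- The ideal `Ī₂ ⊆ S` generated by all generalized 2×2 permanents. -/
noncomputable def I2bar (m n : ℕ) : Ideal (MvPolynomial (Fin m × Fin n) ℂ) :=
  Ideal.span (Set.range (perm (m := m) (n := n)))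

lemma E_mem {m n : ℕ} (i i' : Fin m) (j j' : Fin n) :
    (X (i,j) * X (i',j') + X (i,j') * X (i',j) : MvPolynomial (Fin m × Fin n) ℂ) ∈ I2bar m n := by
  rcases le_total i i' with h1 | h1 <;> rcases le_total j j' with h2 | h2
  · exact Ideal.subset_span ⟨⟨((i,i'),(j,j')), ⟨h1, h2⟩⟩, rfl⟩
  · have := Ideal.subset_span (s := Set.range (perm (m := m) (n := n)))
      ⟨⟨((i,i'),(j',j)), ⟨h1, h2⟩⟩, rfl⟩
    simpa [perm, add_comm, I2bar] using this
  · have := Ideal.subset_span (s := Set.range (perm (m := m) (n := n)))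
      ⟨⟨((i',i),(j,j')), ⟨h1, h2⟩⟩, rfl⟩
    simp only [perm, I2bar, SetLike.mem_coe] at this ⊢
    convert this using 1; ring
  · have := Ideal.subset_span (s := Set.range (perm (m := m) (n := n)))
      ⟨⟨((i',i),(j',j)), ⟨h1, h2⟩⟩, rfl⟩
    simp only [perm, I2bar, SetLike.mem_coe] at this ⊢
    convert this using 1; ring

lemma half_mem {m n : ℕ} {p : MvPolynomial (Fin m × Fin n) ℂ} (hp : p + p ∈ I2bar m n) :
    p ∈ I2bar m n := by
  have h2 : (2⁻¹:ℂ) • (p+p) = p := by rw [← two_smul ℂ p, smul_smul]; norm_num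
  have := Ideal.mul_mem_left _ (C (2⁻¹:ℂ)) hp
  rwa [← smul_eq_C_mul, h2] at this

lemma XX_mem {m n : ℕ} {i i' : Fin m} {j j' : Fin n} (h : i = i' ∨ j = j') :
    (X (i,j) * X (i',j') : MvPolynomial (Fin m × Fin n) ℂ) ∈ I2bar m n := by
  apply half_mem
  rcases h with h | h <;> subst h
  · have := E_mem (m := m) (n := n) i i j j'
    convert this using 2; ring
  · exact E_mem (m := m) (n := n) i i' j j

lemma swap_mem {m n k : ℕ} (r : Fin k → Fin m) (f g : Fin k → Fin n) (x y : Fin k)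
    (hxy : x ≠ y) (hfx : f x = g y) (hfy : f y = g x)
    (hrest : ∀ a, a ≠ x → a ≠ y → f a = g a) :
    ((∏ a, X (r a, f a)) + ∏ a, X (r a, g a) : MvPolynomial (Fin m × Fin n) ℂ) ∈ I2bar m n := by
  have hf : (∏ a, X (r a, f a) : MvPolynomial (Fin m × Fin n) ℂ)
      = (X (r x, f x) * X (r y, f y)) * ∏ a ∈ ({x,y} : Finset (Fin k))ᶜ, X (r a, f a) := by
    rw [← Finset.prod_mul_prod_compl ({x,y} : Finset (Fin k)), Finset.prod_pair hxy]
  have hg : (∏ a, X (r a, g a) : MvPolynomial (Fin m × Fin n) ℂ)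
      = (X (r x, g x) * X (r y, g y)) * ∏ a ∈ ({x,y} : Finset (Fin k))ᶜ, X (r a, g a) := by
    rw [← Finset.prod_mul_prod_compl ({x,y} : Finset (Fin k)), Finset.prod_pair hxy]
  have hpr : (∏ a ∈ ({x,y} : Finset (Fin k))ᶜ, X (r a, f a) : MvPolynomial (Fin m × Fin n) ℂ)
      = ∏ a ∈ ({x,y} : Finset (Fin k))ᶜ, X (r a, g a) := by
    apply Finset.prod_congr rfl
    intro a ha
    simp only [Finset.mem_compl, Finset.mem_insert, Finset.mem_singleton, not_or] at ha
    rw [hrest a ha.1 ha.2]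
  rw [hf, hg, hpr, ← add_mul, hfx, hfy]
  apply Ideal.mul_mem_right
  have := E_mem (m := m) (n := n) (r x) (r y) (g x) (g y)
  convert this using 1; ring

lemma sign_mem {m n k : ℕ} (r : Fin k → Fin m) (c : Fin k → Fin n) (τ : Equiv.Perm (Fin k)) :
    ((∏ a, X (r a, c (τ a))) - ((Equiv.Perm.sign τ : ℤ) : ℂ) • ∏ a, X (r a, c a) :
      MvPolynomial (Fin m × Fin n) ℂ) ∈ I2bar m n := by
  refine Equiv.Perm.swap_induction_on τ (by simp) ?_
  intro f x y hxy ih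
  ·
    have hs : ((Equiv.Perm.sign (Equiv.swap x y * f) : ℤ) : ℂ)
        = -((Equiv.Perm.sign f : ℤ) : ℂ) := by
      rw [Equiv.Perm.sign_mul, Equiv.Perm.sign_swap hxy]; push_cast; ring
    have key : ((∏ a, X (r a, c (Equiv.swap x y (f a)))) + ∏ a, X (r a, c (f a)) :
        MvPolynomial (Fin m × Fin n) ℂ) ∈ I2bar m n := by
      have hxy' : f⁻¹ x ≠ f⁻¹ y := fun h => hxy (by
        have := congrArg f h; simpa using this)
      refine swap_mem r _ _ (f⁻¹ x) (f⁻¹ y) hxy' ?_ ?_ ?_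
      · simp [Equiv.swap_apply_left]
      · simp [Equiv.swap_apply_right]
      · intro a hax hay
        congr 1
        apply Equiv.swap_apply_of_ne_of_ne
        · exact fun h => hax (by simp [← h])
        · exact fun h => hay (by simp [← h])
    have goal_eq : ((∏ a, X (r a, c ((Equiv.swap x y * f) a)))
          - ((Equiv.Perm.sign (Equiv.swap x y * f) : ℤ) : ℂ) • ∏ a, X (r a, c a) :
        MvPolynomial (Fin m × Fin n) ℂ)
        = ((∏ a, X (r a, c (Equiv.swap x y (f a)))) + ∏ a, X (r a, c (f a)))
          - ((∏ a, X (r a, c (f a))) - ((Equiv.Perm.sign f : ℤ) : ℂ) • ∏ a, X (r a, c a)) := by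
      rw [hs]; simp only [Equiv.Perm.mul_apply]; rw [neg_smul]; ring
    rw [goal_eq]
    exact Submodule.sub_mem _ key ih

lemma csmul_mem {m n : ℕ} {p : MvPolynomial (Fin m × Fin n) ℂ} (s : ℂ) (hp : p ∈ I2bar m n) :
    s • p ∈ I2bar m n := by
  rw [smul_eq_C_mul]; exact Ideal.mul_mem_left _ _ hp

lemma det_mem {m n k : ℕ} (r : Fin k → Fin m) (c : Fin k → Fin n) :
    ((Matrix.of fun a b => (X (r a, c b) : MvPolynomial (Fin m × Fin n) ℂ)).det
      - (k.factorial : ℂ) • ∏ a, X (r a, c a)) ∈ I2bar m n := by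
  rw [Matrix.det_apply']
  have hcard : ((k.factorial : ℂ)) • (∏ a, X (r a, c a) : MvPolynomial (Fin m × Fin n) ℂ)
      = ∑ _σ : Equiv.Perm (Fin k), ∏ a, X (r a, c a) := by
    rw [Finset.sum_const, Finset.card_univ, Fintype.card_perm, Fintype.card_fin,
      Nat.cast_smul_eq_nsmul]
  rw [hcard, ← Finset.sum_sub_distrib]
  apply Submodule.sum_mem
  intro σ _
  have h1 : (∏ b, (Matrix.of fun a b => (X (r a, c b) : MvPolynomial (Fin m × Fin n) ℂ)) (σ b) b)
      = ∏ a, X (r a, c (σ⁻¹ a)) := by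
    rw [← Equiv.prod_comp σ (fun a => (X (r a, c (σ⁻¹ a)) : MvPolynomial (Fin m × Fin n) ℂ))]
    simp
  have hcast : ((Equiv.Perm.sign σ : ℤ) : MvPolynomial (Fin m × Fin n) ℂ)
      = C (((Equiv.Perm.sign σ : ℤ) : ℂ)) := by
    rw [map_intCast (C : ℂ →+* MvPolynomial (Fin m × Fin n) ℂ)]
  have hsq : (((Equiv.Perm.sign σ : ℤ) : ℂ)) * (((Equiv.Perm.sign σ : ℤ) : ℂ)) = 1 := by
    rcases Int.units_eq_one_or (Equiv.Perm.sign σ) with h | h <;> rw [h] <;> norm_num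
  have key := csmul_mem (((Equiv.Perm.sign σ : ℤ) : ℂ)) (sign_mem r c σ⁻¹)
  rw [smul_sub, smul_smul, Equiv.Perm.sign_inv, hsq, one_smul] at key
  rw [h1, hcast, ← smul_eq_C_mul]
  exact key

lemma prodX_hom {m n k : ℕ} (v : Fin k → Fin m × Fin n) :
    ((∏ a, X (v a)) : MvPolynomial (Fin m × Fin n) ℂ).IsHomogeneous k := by
  have := IsHomogeneous.prod Finset.univ (fun a => (X (v a) : MvPolynomial (Fin m × Fin n) ℂ))
    (fun _ => 1) (fun i _ => isHomogeneous_X ℂ (v i))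
  simpa using this

lemma det_hom {m n k : ℕ} (r : Fin k → Fin m) (c : Fin k → Fin n) :
    ((Matrix.of fun a b => (X (r a, c b) : MvPolynomial (Fin m × Fin n) ℂ)).det).IsHomogeneous
      k := by
  rw [← mem_homogeneousSubmodule, Matrix.det_apply']
  apply Submodule.sum_mem
  intro σ _
  have hcast : ((Equiv.Perm.sign σ : ℤ) : MvPolynomial (Fin m × Fin n) ℂ)
      = C (((Equiv.Perm.sign σ : ℤ) : ℂ)) := by
    rw [map_intCast (C : ℂ →+* MvPolynomial (Fin m × Fin n) ℂ)]
  rw [hcast, ← smul_eq_C_mul]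
  exact Submodule.smul_mem _ _ ((mem_homogeneousSubmodule _ _).mpr
    (prodX_hom (fun b => (r (σ b), c b))))

lemma mono_mem {m n k : ℕ} (d : (Fin m × Fin n) →₀ ℕ) (hd : d.degree = k) :
    (monomial d 1 : MvPolynomial (Fin m × Fin n) ℂ) ∈
      (Submodule.restrictScalars ℂ (I2bar m n) ⊓
          homogeneousSubmodule (Fin m × Fin n) ℂ k) ⊔
        Submodule.span ℂ
          {f | ∃ r : Fin k → Fin m, ∃ c : Fin k → Fin n, StrictMono r ∧ StrictMono c ∧
            f = (Matrix.of fun a b =>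
              (X (r a, c b) : MvPolynomial (Fin m × Fin n) ℂ)).det} := by
  classical
  by_cases hbad : ∃ u v : Fin m × Fin n,
      (Finsupp.single u 1 + Finsupp.single v 1 ≤ d) ∧ (u.1 = v.1 ∨ u.2 = v.2)
  · obtain ⟨u, v, hle, huv⟩ := hbad
    apply Submodule.mem_sup_left
    refine ⟨?_, (mem_homogeneousSubmodule _ _).mpr (isHomogeneous_monomial _ hd)⟩
    have heq : (monomial d 1 : MvPolynomial (Fin m × Fin n) ℂ)
        = (X u * X v) * monomial (d - (Finsupp.single u 1 + Finsupp.single v 1)) 1 := by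
      have hXu : (X u : MvPolynomial (Fin m × Fin n) ℂ) = monomial (Finsupp.single u 1) 1 := rfl
      have hXv : (X v : MvPolynomial (Fin m × Fin n) ℂ) = monomial (Finsupp.single v 1) 1 := rfl
      rw [hXu, hXv, monomial_mul, monomial_mul, add_tsub_cancel_of_le hle, one_mul, one_mul]
    show _ ∈ I2bar m n
    rw [heq]
    exact Ideal.mul_mem_right _ _ (XX_mem huv)
  · push_neg at hbad
    set s := d.support with hs
    have hone : ∀ v ∈ s, d v = 1 := by
      intro v hv
      have h1 : 1 ≤ d v := Nat.one_le_iff_ne_zero.mpr (Finsupp.mem_support_iff.mp hv)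
      by_contra h
      have h2 : 2 ≤ d v := by omega
      have hle : Finsupp.single v 1 + Finsupp.single v 1 ≤ d := by
        rw [Finsupp.le_def]; intro a
        simp only [Finsupp.add_apply, Finsupp.single_apply]
        split_ifs with hh
        · have : 2 ≤ d a := hh ▸ h2; omega
        · omega
      exact (hbad v v hle).1 rfl
    have hpairle : ∀ u ∈ s, ∀ v ∈ s, u ≠ v →
        Finsupp.single u 1 + Finsupp.single v 1 ≤ d := by
      intro u hu v hv huv
      have hdu : 1 ≤ d u := Nat.one_le_iff_ne_zero.mpr (Finsupp.mem_support_iff.mp hu)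
      have hdv : 1 ≤ d v := Nat.one_le_iff_ne_zero.mpr (Finsupp.mem_support_iff.mp hv)
      rw [Finsupp.le_def]; intro a
      simp only [Finsupp.add_apply, Finsupp.single_apply]
      split_ifs with h1 h2 h2
      · exact absurd (h1.trans h2.symm) huv
      · have : 1 ≤ d a := h1 ▸ hdu; omega
      · have : 1 ≤ d a := h2 ▸ hdv; omega
      · omega
    have hfst : ∀ u ∈ s, ∀ v ∈ s, u.1 = v.1 → u = v := by
      intro u hu v hv h
      by_contra hne
      exact (hbad u v (hpairle u hu v hv hne)).1 h
    have hsnd : ∀ u ∈ s, ∀ v ∈ s, u.2 = v.2 → u = v := by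
      intro u hu v hv h
      by_contra hne
      exact (hbad u v (hpairle u hu v hv hne)).2 h
    have hcard : s.card = k := by
      have h1 : d.degree = ∑ v ∈ s, d v := rfl
      rw [Finset.sum_congr rfl hone, Finset.sum_const, smul_eq_mul, mul_one] at h1
      rw [← hd, h1]
    have hR : (s.image Prod.fst).card = k := by
      rw [Finset.card_image_of_injOn, hcard]
      intro u hu v hv h
      exact hfst u (Finset.mem_coe.mp hu) v (Finset.mem_coe.mp hv) h
    have hC : (s.image Prod.snd).card = k := by
      rw [Finset.card_image_of_injOn, hcard]
      intro u hu v hv h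
      exact hsnd u (Finset.mem_coe.mp hu) v (Finset.mem_coe.mp hv) h
    set rIso := (s.image Prod.fst).orderIsoOfFin hR with hrIso
    set cIso := (s.image Prod.snd).orderIsoOfFin hC with hcIso
    set r : Fin k → Fin m := fun a => (rIso a : Fin m) with hr
    set c : Fin k → Fin n := fun a => (cIso a : Fin n) with hc
    have hrmono : StrictMono r := fun a b hab => Subtype.coe_lt_coe.mpr (rIso.strictMono hab)
    have hcmono : StrictMono c := fun a b hab => Subtype.coe_lt_coe.mpr (cIso.strictMono hab)
    set f1 : {v // v ∈ s} → Fin k :=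
      fun v => rIso.symm ⟨v.1.1, Finset.mem_image_of_mem _ v.2⟩ with hf1
    set f2 : {v // v ∈ s} → Fin k :=
      fun v => cIso.symm ⟨v.1.2, Finset.mem_image_of_mem _ v.2⟩ with hf2
    have hf1inj : Function.Injective f1 := by
      intro u v h
      have h2 := congrArg rIso h
      simp only [hf1, OrderIso.apply_symm_apply] at h2
      have h3 : u.1.1 = v.1.1 := congrArg Subtype.val h2
      exact Subtype.ext (hfst u.1 u.2 v.1 v.2 h3)
    have hf2inj : Function.Injective f2 := by
      intro u v h
      have h2 := congrArg cIso h
      simp only [hf2, OrderIso.apply_symm_apply] at h2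
      have h3 : u.1.2 = v.1.2 := congrArg Subtype.val h2
      exact Subtype.ext (hsnd u.1 u.2 v.1 v.2 h3)
    have hcc : Fintype.card {v // v ∈ s} = Fintype.card (Fin k) := by
      rw [Fintype.card_coe, hcard, Fintype.card_fin]
    set e1 := Equiv.ofBijective f1
      ((Fintype.bijective_iff_injective_and_card f1).mpr ⟨hf1inj, hcc⟩) with he1
    set e2 := Equiv.ofBijective f2
      ((Fintype.bijective_iff_injective_and_card f2).mpr ⟨hf2inj, hcc⟩) with he2
    set τ := e1.symm.trans e2 with hτ
    have hval : ∀ a : Fin k,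
        ((e1.symm a : {v // v ∈ s}) : Fin m × Fin n) = (r a, c (τ a)) := by
      intro a
      set v := e1.symm a with hv
      have h1 : f1 v = a := e1.apply_symm_apply a
      have hr1 : r a = v.1.1 := by
        rw [← h1]
        show (rIso (rIso.symm _) : Fin m) = _
        rw [OrderIso.apply_symm_apply]
      have hc1 : c (τ a) = v.1.2 := by
        show (cIso (cIso.symm _) : Fin n) = _
        rw [OrderIso.apply_symm_apply]
      rw [hr1, hc1]
    have hmono : (monomial d 1 : MvPolynomial (Fin m × Fin n) ℂ)
        = ∏ a, X (r a, c (τ a)) := by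
      rw [monomial_eq, C_1, one_mul]
      have h1 : (d.prod fun v e => (X v : MvPolynomial (Fin m × Fin n) ℂ) ^ e)
          = ∏ v ∈ s, X v :=
        Finset.prod_congr rfl (fun v hv => by rw [hone v hv]; exact pow_one _)
      rw [h1, ← Finset.prod_coe_sort s (fun v => (X v : MvPolynomial (Fin m × Fin n) ℂ)),
        ← Equiv.prod_comp e1.symm
          (fun v : {v // v ∈ s} => (X (v : Fin m × Fin n) : MvPolynomial (Fin m × Fin n) ℂ))]
      exact Finset.prod_congr rfl (fun a _ => by rw [hval a])
    have hM0hom : ((∏ a, X (r a, c a)) : MvPolynomial (Fin m × Fin n) ℂ) ∈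
        homogeneousSubmodule (Fin m × Fin n) ℂ k :=
      (mem_homogeneousSubmodule _ _).mpr (prodX_hom (fun a => (r a, c a)))
    have hMhom : ((∏ a, X (r a, c (τ a))) : MvPolynomial (Fin m × Fin n) ℂ) ∈
        homogeneousSubmodule (Fin m × Fin n) ℂ k :=
      (mem_homogeneousSubmodule _ _).mpr (prodX_hom (fun a => (r a, c (τ a))))
    have hdethom : ((Matrix.of fun a b =>
        (X (r a, c b) : MvPolynomial (Fin m × Fin n) ℂ)).det) ∈
        homogeneousSubmodule (Fin m × Fin n) ℂ k :=
      (mem_homogeneousSubmodule _ _).mpr (det_hom r c)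
    have hdetspan : ((Matrix.of fun a b =>
        (X (r a, c b) : MvPolynomial (Fin m × Fin n) ℂ)).det) ∈
        Submodule.span ℂ
          {f | ∃ r : Fin k → Fin m, ∃ c : Fin k → Fin n, StrictMono r ∧ StrictMono c ∧
            f = (Matrix.of fun a b =>
              (X (r a, c b) : MvPolynomial (Fin m × Fin n) ℂ)).det} :=
      Submodule.subset_span ⟨r, c, hrmono, hcmono, rfl⟩
    have h1 : ((Matrix.of fun a b => (X (r a, c b) : MvPolynomial (Fin m × Fin n) ℂ)).det
        - (k.factorial : ℂ) • ∏ a, X (r a, c a)) ∈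
        (Submodule.restrictScalars ℂ (I2bar m n) ⊓
          homogeneousSubmodule (Fin m × Fin n) ℂ k) :=
      ⟨det_mem r c, Submodule.sub_mem _ hdethom (Submodule.smul_mem _ _ hM0hom)⟩
    have hk0 : (k.factorial : ℂ) ≠ 0 := Nat.cast_ne_zero.mpr (Nat.factorial_ne_zero k)
    have hM0 : ((∏ a, X (r a, c a)) : MvPolynomial (Fin m × Fin n) ℂ) ∈
        (Submodule.restrictScalars ℂ (I2bar m n) ⊓
            homogeneousSubmodule (Fin m × Fin n) ℂ k) ⊔
          Submodule.span ℂ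
            {f | ∃ r : Fin k → Fin m, ∃ c : Fin k → Fin n, StrictMono r ∧ StrictMono c ∧
              f = (Matrix.of fun a b =>
                (X (r a, c b) : MvPolynomial (Fin m × Fin n) ℂ)).det} := by
      have heq : ((∏ a, X (r a, c a)) : MvPolynomial (Fin m × Fin n) ℂ)
          = (k.factorial : ℂ)⁻¹ •
              (Matrix.of fun a b => (X (r a, c b) : MvPolynomial (Fin m × Fin n) ℂ)).det
            - (k.factorial : ℂ)⁻¹ •
              ((Matrix.of fun a b => (X (r a, c b) : MvPolynomial (Fin m × Fin n) ℂ)).det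
                - (k.factorial : ℂ) • ∏ a, X (r a, c a)) := by
        rw [← smul_sub, sub_sub_cancel, smul_smul, inv_mul_cancel₀ hk0, one_smul]
      rw [heq]
      exact Submodule.sub_mem _
        (Submodule.smul_mem _ _ (Submodule.mem_sup_right hdetspan))
        (Submodule.smul_mem _ _ (Submodule.mem_sup_left h1))
    have h2 : ((∏ a, X (r a, c (τ a)))
        - ((Equiv.Perm.sign τ : ℤ) : ℂ) • ∏ a, X (r a, c a) :
          MvPolynomial (Fin m × Fin n) ℂ) ∈
        (Submodule.restrictScalars ℂ (I2bar m n) ⊓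
          homogeneousSubmodule (Fin m × Fin n) ℂ k) :=
      ⟨sign_mem r c τ, Submodule.sub_mem _ hMhom (Submodule.smul_mem _ _ hM0hom)⟩
    rw [hmono, show ((∏ a, X (r a, c (τ a))) : MvPolynomial (Fin m × Fin n) ℂ)
        = ((∏ a, X (r a, c (τ a)))
            - ((Equiv.Perm.sign τ : ℤ) : ℂ) • ∏ a, X (r a, c a))
          + ((Equiv.Perm.sign τ : ℤ) : ℂ) • ∏ a, X (r a, c a) by rw [sub_add_cancel]]
    exact Submodule.add_mem _ (Submodule.mem_sup_left h2) (Submodule.smul_mem _ _ hM0)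

/-- For every `k`, `S_k = (Ī₂)_k + span_ℂ{k×k minors of the generic matrix}`. -/
theorem homogeneous_component_eq_permanents_sup_minors (m n : ℕ)
    (hm : 1 ≤ m) (hn : 1 ≤ n) (k : ℕ) :
    homogeneousSubmodule (Fin m × Fin n) ℂ k =
      (Submodule.restrictScalars ℂ (I2bar m n) ⊓
          homogeneousSubmodule (Fin m × Fin n) ℂ k) ⊔
        Submodule.span ℂ
          {f | ∃ r : Fin k → Fin m, ∃ c : Fin k → Fin n, StrictMono r ∧ StrictMono c ∧
            f = (Matrix.of fun a b =>
              (X (r a, c b) : MvPolynomial (Fin m × Fin n) ℂ)).det} := by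
  apply le_antisymm
  · intro p hp
    rw [← support_sum_monomial_coeff p]
    apply Submodule.sum_mem
    intro d hdsup
    have hd : d.degree = k := by
      rw [Finsupp.degree_eq_weight_one]
      exact (mem_homogeneousSubmodule _ _).mp hp (mem_support_iff.mp hdsup)
    have heq : (monomial d (coeff d p) : MvPolynomial (Fin m × Fin n) ℂ)
        = (coeff d p) • monomial d 1 := by
      rw [smul_monomial, smul_eq_mul, mul_one]
    rw [heq]
    exact Submodule.smul_mem _ _ (mono_mem d hd)
  · apply sup_le
    · exact inf_le_right
    · rw [Submodule.span_le]
      rintro f ⟨r, c, hr, hc, rfl⟩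
      exact (mem_homogeneousSubmodule _ _).mpr (det_hom r c)
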